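/- arXiv:1810.02957 — 2 statements merged into one kernel-verified Lean document; each statement's English description precedes it below -/
import Mathlib

section
/- Suppose a self-adjoint operator A_m (depending on a parameter m > 0) satisfies, for all φ in its domain, ‖A_m φ‖² = ‖Tφ‖² + m²‖φ‖² + m·q(φ) with q(φ) ≥ 0 and ‖Tφ‖² ≥ 0. Then for ξ = η + iμ with |μ| ≥ μ₀, |η| ≤ ρ, and m > 2√|μ₀² - 2ρ²|, one has ‖(A_m - ξ)φ‖² ≥ (m/2)q(φ) + (m²/4)‖φ‖². Consequently ‖(A_m - ξ)⁻¹h‖ ≤ (2/m)‖h‖ and q((A_m - ξ)⁻¹h) ≤ (2/m)‖h‖² for all h. -/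
open scoped InnerProductSpace

/-- Abstract version of Lemma 3.3: if a symmetric operator `A_m` satisfies
`‖A_m φ‖² = t(φ) + m²‖φ‖² + m q(φ)` with `t, q ≥ 0`, then for `ξ = η + iμ` with
`|μ| ≥ μ₀`, `|η| ≤ ρ` and `m > 2√|μ₀² - 2ρ²|`, one has
`‖(A_m - ξ)φ‖² ≥ (m/2) q(φ) + (m²/4)‖φ‖²`; consequently
`‖(A_m - ξ)⁻¹ h‖ ≤ (2/m)‖h‖` and `q((A_m - ξ)⁻¹ h) ≤ (2/m)‖h‖²`. -/
theorem mass_resolvent_estimates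
    {H : Type*} [NormedAddCommGroup H] [InnerProductSpace ℂ H] [CompleteSpace H]
    (A : H →ₗ[ℂ] H) (hA : A.IsSymmetric)
    (m : ℝ) (t q : H → ℝ) (ht : ∀ φ, 0 ≤ t φ) (hq : ∀ φ, 0 ≤ q φ)
    (hsq : ∀ φ, ‖A φ‖ ^ 2 = t φ + m ^ 2 * ‖φ‖ ^ 2 + m * q φ)
    (η μ μ₀ ρ : ℝ) (hμ₀ : 0 < μ₀) (hμ : μ₀ ≤ |μ|) (hη : |η| ≤ ρ)
    (hm : m > 2 * Real.sqrt |μ₀ ^ 2 - 2 * ρ ^ 2|) :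
    (∀ φ : H,
      ‖A φ - (((η : ℂ) + (μ : ℂ) * Complex.I) : ℂ) • φ‖ ^ 2 ≥
        (m / 2) * q φ + (m ^ 2 / 4) * ‖φ‖ ^ 2) ∧
    (∀ h φ : H, A φ - (((η : ℂ) + (μ : ℂ) * Complex.I) : ℂ) • φ = h →
      ‖φ‖ ≤ (2 / m) * ‖h‖ ∧ q φ ≤ (2 / m) * ‖h‖ ^ 2) := by
  have hm0 : 0 < m := lt_of_le_of_lt (by positivity) hm
  have hρ0 : 0 ≤ ρ := le_trans (abs_nonneg η) hη
  have hm4 : 2 * ρ ^ 2 - μ₀ ^ 2 < m ^ 2 / 4 := by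
    have h1 := Real.sq_sqrt (abs_nonneg (μ₀ ^ 2 - 2 * ρ ^ 2))
    have h2 := Real.sqrt_nonneg |μ₀ ^ 2 - 2 * ρ ^ 2|
    have h3 : 2 * ρ ^ 2 - μ₀ ^ 2 ≤ |μ₀ ^ 2 - 2 * ρ ^ 2| := by
      rw [abs_sub_comm]; exact le_abs_self _
    nlinarith
  have hη2 : η ^ 2 ≤ ρ ^ 2 := by nlinarith [sq_abs η, abs_nonneg η]
  have hμ2 : μ₀ ^ 2 ≤ μ ^ 2 := by nlinarith [sq_abs μ, abs_nonneg μ, hμ₀.le]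
  set ξ : ℂ := (η : ℂ) + (μ : ℂ) * Complex.I with hξ
  have key : ∀ φ : H, ‖A φ - ξ • φ‖ ^ 2
      = ‖A φ‖ ^ 2 - 2 * η * (inner ℂ (A φ) φ : ℂ).re + (η ^ 2 + μ ^ 2) * ‖φ‖ ^ 2 := by
    intro φ
    have him : (inner ℂ (A φ) φ : ℂ).im = 0 := by
      have h2 : (starRingEnd ℂ) (inner ℂ (A φ) φ : ℂ) = (inner ℂ (A φ) φ : ℂ) := by
        rw [inner_conj_symm, ← hA φ φ]
      exact Complex.conj_eq_iff_im.mp h2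
    have hexp := @norm_sub_sq ℂ H _ _ _ (A φ) (ξ • φ)
    rw [hexp, inner_smul_right, norm_smul]
    have hnξ : ‖ξ‖ ^ 2 = η ^ 2 + μ ^ 2 := by
      rw [Complex.sq_norm]
      simp [hξ, Complex.normSq_apply]; ring
    rw [mul_pow, hnξ]
    simp only [RCLike.re_to_complex]
    rw [Complex.mul_re, him]
    simp [hξ]
    ring
  have main : ∀ φ : H, ‖A φ - ξ • φ‖ ^ 2 ≥ (m / 2) * q φ + (m ^ 2 / 4) * ‖φ‖ ^ 2 := by
    intro φ
    have hCS : |(inner ℂ (A φ) φ : ℂ).re| ≤ ‖A φ‖ * ‖φ‖ := by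
      calc |(inner ℂ (A φ) φ : ℂ).re| ≤ ‖(inner ℂ (A φ) φ : ℂ)‖ :=
            Complex.abs_re_le_norm _
        _ = ‖(inner ℂ (A φ) φ : ℂ)‖ := rfl
        _ ≤ ‖A φ‖ * ‖φ‖ := norm_inner_le_norm _ _
    have h1 : η * (inner ℂ (A φ) φ : ℂ).re ≤ ρ * (‖A φ‖ * ‖φ‖) := by
      calc η * (inner ℂ (A φ) φ : ℂ).re ≤ |η * (inner ℂ (A φ) φ : ℂ).re| := le_abs_self _
        _ = |η| * |(inner ℂ (A φ) φ : ℂ).re| := abs_mul _ _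
        _ ≤ ρ * (‖A φ‖ * ‖φ‖) :=
            mul_le_mul hη hCS (abs_nonneg _) hρ0
    rw [key φ]
    nlinarith [hsq φ, ht φ, hq φ, sq_nonneg (‖A φ‖ - 2 * ρ * ‖φ‖), sq_nonneg ‖φ‖,
      sq_nonneg η, norm_nonneg φ, norm_nonneg (A φ), hm0.le]
  refine ⟨main, fun h φ hφ => ?_⟩
  have hmain := main φ
  rw [hφ] at hmain
  have hq0 := hq φ
  constructor
  · have hsqle : (m * ‖φ‖) ^ 2 ≤ (2 * ‖h‖) ^ 2 := by nlinarith
    have hle : m * ‖φ‖ ≤ 2 * ‖h‖ := by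
      nlinarith [norm_nonneg φ, norm_nonneg h, hm0.le]
    rw [div_mul_eq_mul_div, le_div_iff₀ hm0]
    linarith
  · rw [div_mul_eq_mul_div, le_div_iff₀ hm0]
    nlinarith
end

section
/- Let A and B be self-adjoint operators on Hilbert spaces H and H₀ ⊂ H respectively (B extended by 0 on H₀^⊥), let K be a compact subset of the resolvent set of B with μ₀ > max_{z∈K}|Im z| and ρ > 0. Suppose sup over ξ with |Im ξ| ≥ μ₀, |Re ξ| ≤ ρ of ‖(A-ξ)⁻¹ - (B-ξ)⁻¹ ⊕ 0‖ ≤ C'/√m. Then there exists m₀ such that for m > m₀ every z ∈ K lies in the resolvent set of A, and sup_{z∈K} ‖(A-z)⁻¹ - (B-z)⁻¹ ⊕ 0‖ ≤ C/√m for some constant C depending only on K, μ₀, ρ, C'. -/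
open ContinuousLinearMap


private lemma res_id0 {R : Type*} [Ring R] [Algebra ℂ R] (a : R) {η ζ : ℂ}
    (hη : IsUnit (a - η • 1)) (hζ : IsUnit (a - ζ • 1)) :
    Ring.inverse (a - ζ • 1) - Ring.inverse (a - η • 1)
      = (ζ - η) • (Ring.inverse (a - ζ • 1) * Ring.inverse (a - η • 1)) := by
  set X := Ring.inverse (a - η • 1) with hXdef
  set Z := Ring.inverse (a - ζ • 1) with hZdef
  have h1 : (a - η • 1) * X = 1 := Ring.mul_inverse_cancel _ hη
  have h2 : Z * (a - ζ • 1) = 1 := Ring.inverse_mul_cancel _ hζ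
  have key : Z - X = Z * ((a - η • 1) - (a - ζ • 1)) * X := by
    rw [mul_sub, sub_mul, mul_assoc Z (a - η • 1) X, h1, mul_one, h2, one_mul]
  have h3 : (a - η • 1) - (a - ζ • 1) = (ζ - η) • (1 : R) := by
    rw [sub_smul]; abel
  rw [key, h3, mul_smul_comm, smul_mul_assoc, mul_one]

private lemma step_lemma0 {R : Type*} [NormedRing R] [NormedAlgebra ℂ R] [CompleteSpace R]
    (h1 : ‖(1:R)‖ ≤ 1) (a : R) (g : ℂ → R) (M : ℝ) {η ζ : ℂ}
    (hgid : g ζ - g η = (ζ - η) • (g ζ * g η))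
    (hgη : ‖g η‖ ≤ M) (hgζ : ‖g ζ‖ ≤ M)
    (ha : IsUnit (a - η • 1))
    (hD : ‖Ring.inverse (a - η • 1) - g η‖ ≤ 1)
    (hstep : ‖ζ - η‖ * (M + 2) ≤ 1/2) :
    IsUnit (a - ζ • 1) ∧
      ‖Ring.inverse (a - ζ • 1) - g ζ‖ ≤ 5 * ‖Ring.inverse (a - η • 1) - g η‖ := by
  have hM0 : 0 ≤ M := le_trans (norm_nonneg _) hgη
  have he0 : 0 ≤ ‖ζ - η‖ := norm_nonneg _
  set X := Ring.inverse (a - η • 1) with hXdef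
  have hX : ‖X‖ ≤ M + 1 := by
    calc ‖X‖ = ‖(X - g η) + g η‖ := by rw [sub_add_cancel]
    _ ≤ ‖X - g η‖ + ‖g η‖ := norm_add_le _ _
    _ ≤ M + 1 := by linarith
  set t := (ζ - η) • X with htdef
  have ht : ‖t‖ ≤ 1/2 := by
    rw [htdef, norm_smul]
    have h' : ‖ζ - η‖ * ‖X‖ ≤ ‖ζ - η‖ * (M + 2) := by nlinarith
    exact le_trans h' hstep
  have ht1 : ‖t‖ < 1 := by linarith
  have key : a - ζ • 1 = (a - η • 1) * (1 - t) := by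
    rw [mul_sub, mul_one, htdef, mul_smul_comm, Ring.mul_inverse_cancel _ ha]
    rw [sub_smul]; abel
  have hu : IsUnit (a - ζ • 1) := by
    rw [key]; exact ha.mul (isUnit_one_sub_of_norm_lt_one ht1)
  refine ⟨hu, ?_⟩
  set Z := Ring.inverse (a - ζ • 1) with hZdef
  have hw : a - ζ • 1 = ↑(ha.unit * (Units.oneSub t ht1)) := by
    rw [Units.val_mul, IsUnit.unit_spec, Units.val_oneSub]; exact key
  have e1 : (↑(Units.oneSub t ht1)⁻¹ : R) = Ring.inverse (1 - t) := by
    rw [← Ring.inverse_unit (Units.oneSub t ht1), Units.val_oneSub]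
  have e2 : (↑ha.unit⁻¹ : R) = X := by
    rw [← Ring.inverse_unit ha.unit, IsUnit.unit_spec]
  have hZeq : Z = Ring.inverse (1 - t) * X := by
    rw [hZdef, hw, Ring.inverse_unit, mul_inv_rev, Units.val_mul, e1, e2]
  have hginv : ‖Ring.inverse (1 - t)‖ ≤ 2 := by
    rw [← geom_series_eq_inverse t ht1]
    refine le_trans (tsum_geometric_le_of_norm_lt_one t ht1) ?_
    have h2 : (1 - ‖t‖)⁻¹ ≤ 2 := by
      have hhalf : (1:ℝ)/2 ≤ 1 - ‖t‖ := by linarith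
      calc (1 - ‖t‖)⁻¹ ≤ ((1:ℝ)/2)⁻¹ := by
            exact inv_anti₀ (by norm_num) hhalf
      _ = 2 := by norm_num
    linarith
  have hZ : ‖Z‖ ≤ 2 * (M + 1) := by
    rw [hZeq]
    refine le_trans (norm_mul_le _ _) ?_
    nlinarith [norm_nonneg (Ring.inverse (1 - t)), norm_nonneg X]
  have hid : Z - X = (ζ - η) • (Z * X) := res_id0 a ha hu
  have heq : Z - g ζ = (X - g η) + ((ζ - η) • (Z * (X - g η)) + (ζ - η) • ((Z - g ζ) * g η)) := by
    have hsplit : Z * X - g ζ * g η = Z * (X - g η) + (Z - g ζ) * g η := by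
      rw [mul_sub, sub_mul]; abel
    calc Z - g ζ = (X - g η) + ((Z - X) - (g ζ - g η)) := by abel
    _ = (X - g η) + ((ζ - η) • (Z * X) - (ζ - η) • (g ζ * g η)) := by rw [hid, hgid]
    _ = (X - g η) + (ζ - η) • (Z * X - g ζ * g η) := by rw [smul_sub]
    _ = _ := by rw [hsplit, smul_add]
  have n3 : ‖(ζ - η) • (Z * (X - g η))‖ ≤ ‖ζ - η‖ * (‖Z‖ * ‖X - g η‖) := by
    rw [norm_smul]; exact mul_le_mul_of_nonneg_left (norm_mul_le _ _) he0
  have n4 : ‖(ζ - η) • ((Z - g ζ) * g η)‖ ≤ ‖ζ - η‖ * (‖Z - g ζ‖ * ‖g η‖) := by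
    rw [norm_smul]; exact mul_le_mul_of_nonneg_left (norm_mul_le _ _) he0
  have h4 : ‖Z - g ζ‖ ≤ ‖X - g η‖ + (‖ζ - η‖ * (‖Z‖ * ‖X - g η‖) + ‖ζ - η‖ * (‖Z - g ζ‖ * ‖g η‖)) :=
    calc ‖Z - g ζ‖ = ‖(X - g η) + ((ζ - η) • (Z * (X - g η)) + (ζ - η) • ((Z - g ζ) * g η))‖ :=
          congrArg norm heq
    _ ≤ ‖X - g η‖ + ‖(ζ - η) • (Z * (X - g η)) + (ζ - η) • ((Z - g ζ) * g η)‖ := norm_add_le _ _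
    _ ≤ ‖X - g η‖ + (‖(ζ - η) • (Z * (X - g η))‖ + ‖(ζ - η) • ((Z - g ζ) * g η)‖) := by
          have := norm_add_le ((ζ - η) • (Z * (X - g η))) ((ζ - η) • ((Z - g ζ) * g η))
          linarith
    _ ≤ _ := by linarith [n3, n4]
  have hc1 : ‖ζ - η‖ * ‖Z‖ ≤ 1 := by nlinarith
  have hc2 : ‖ζ - η‖ * ‖g η‖ ≤ 1/2 := by nlinarith
  have hb1 : ‖ζ - η‖ * (‖Z‖ * ‖X - g η‖) ≤ ‖X - g η‖ := by
    nlinarith [mul_le_mul_of_nonneg_right hc1 (norm_nonneg (X - g η)), norm_nonneg (X - g η)]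
  have hb2 : ‖ζ - η‖ * (‖Z - g ζ‖ * ‖g η‖) ≤ (1/2) * ‖Z - g ζ‖ := by
    nlinarith [mul_le_mul_of_nonneg_right hc2 (norm_nonneg (Z - g ζ)), norm_nonneg (Z - g ζ)]
  linarith [norm_nonneg (X - g η)]

private lemma chain_lemma0 {R : Type*} [NormedRing R] [NormedAlgebra ℂ R] [CompleteSpace R]
    (h1 : ‖(1:R)‖ ≤ 1) (a : R) (g : ℂ → R) (M : ℝ) :
    ∀ (n : ℕ) (ξ ζ : ℂ) (ε : ℝ),
    (∀ η ∈ segment ℝ ξ ζ, ∀ η' ∈ segment ℝ ξ ζ, g η' - g η = (η' - η) • (g η' * g η)) →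
    (∀ η ∈ segment ℝ ξ ζ, ‖g η‖ ≤ M) →
    ‖ζ - ξ‖ * (2*(M + 2)) ≤ (n : ℝ) →
    IsUnit (a - ξ • 1) → ‖Ring.inverse (a - ξ • 1) - g ξ‖ ≤ ε →
    (5:ℝ)^n * ε ≤ 1 →
    IsUnit (a - ζ • 1) ∧ ‖Ring.inverse (a - ζ • 1) - g ζ‖ ≤ 5^n * ε := by
  intro n
  induction n with
  | zero =>
    intro ξ ζ ε hgid hgM hlen hu hD hsmall
    have hM0 : 0 ≤ M := le_trans (norm_nonneg _) (hgM ξ (left_mem_segment ℝ ξ ζ))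
    have hζξ : ζ = ξ := by
      have hlen' : ‖ζ - ξ‖ * (2*(M+2)) ≤ 0 := by exact_mod_cast hlen
      have h0 : ‖ζ - ξ‖ = 0 := by nlinarith [norm_nonneg (ζ - ξ)]
      exact sub_eq_zero.mp (norm_eq_zero.mp h0)
    subst hζξ
    exact ⟨hu, by simpa using hD⟩
  | succ n ih =>
    intro ξ ζ ε hgid hgM hlen hu hD hsmall
    push_cast at hlen
    have hM0 : 0 ≤ M := le_trans (norm_nonneg _) (hgM ξ (left_mem_segment ℝ ξ ζ))
    have hε0 : 0 ≤ ε := le_trans (norm_nonneg _) hD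
    have hpow1 : (1:ℝ) ≤ 5^n := one_le_pow₀ (by norm_num)
    have hpow2 : (5:ℝ)^n ≤ 5^(n+1) := by
      have h' : (5:ℝ)^(n+1) = 5^n*5 := pow_succ 5 n
      nlinarith
    have h5n : (5:ℝ)^n * ε ≤ 1 := le_trans (by nlinarith) hsmall
    by_cases hsl : ‖ζ - ξ‖ * (2*(M+2)) ≤ (n:ℝ)
    · obtain ⟨hu2, hb⟩ := ih ξ ζ ε hgid hgM hsl hu hD h5n
      exact ⟨hu2, le_trans hb (by nlinarith)⟩
    · push_neg at hsl
      have hn0 : (0:ℝ) ≤ (n:ℝ) := Nat.cast_nonneg n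
      have hrpos : 0 < ‖ζ - ξ‖ := by nlinarith [norm_nonneg (ζ - ξ)]
      have hdpos : (0:ℝ) < 1/(2*(M+2)) := by positivity
      by_cases hone : ‖ζ - ξ‖ ≤ 1/(2*(M+2))
      · have hDξ1 : ‖Ring.inverse (a - ξ•1) - g ξ‖ ≤ 1 := le_trans hD (by nlinarith)
        have hst : ‖ζ - ξ‖ * (M+2) ≤ 1/2 := by
          have h2 : (1/(2*(M+2))) * (M+2) = 1/2 := by field_simp
          nlinarith
        obtain ⟨hu2, hb⟩ := step_lemma0 h1 a g M
          (hgid ξ (left_mem_segment ℝ ξ ζ) ζ (right_mem_segment ℝ ξ ζ))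
          (hgM ξ (left_mem_segment ℝ ξ ζ)) (hgM ζ (right_mem_segment ℝ ξ ζ)) hu hDξ1 hst
        refine ⟨hu2, le_trans hb ?_⟩
        have h5 : (5:ℝ) ≤ 5^(n+1) := by
          calc (5:ℝ) = 5^1 := (pow_one 5).symm
          _ ≤ 5^(n+1) := pow_le_pow_right₀ (by norm_num) (by omega)
        nlinarith
      · push_neg at hone
        set c : ℝ := 1 - (1/(2*(M+2))) / ‖ζ - ξ‖ with hc
        have hfrac1 : (1/(2*(M+2))) / ‖ζ - ξ‖ < 1 := (div_lt_one hrpos).mpr hone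
        have hfrac0 : 0 < (1/(2*(M+2))) / ‖ζ - ξ‖ := div_pos hdpos hrpos
        have hc0 : 0 < c := by rw [hc]; linarith
        have hc1 : c < 1 := by rw [hc]; linarith
        set mid : ℂ := ξ + c • (ζ - ξ) with hmiddef
        have hmidmem : mid ∈ segment ℝ ξ ζ := by
          refine ⟨1 - c, c, by linarith, by linarith, by ring, ?_⟩
          rw [hmiddef]; module
        have hsub : segment ℝ ξ mid ⊆ segment ℝ ξ ζ :=
          (convex_segment ξ ζ).segment_subset (left_mem_segment ℝ ξ ζ) hmidmem
        have hmidξ : ‖mid - ξ‖ = c * ‖ζ - ξ‖ := by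
          rw [hmiddef, add_sub_cancel_left, norm_smul, Real.norm_eq_abs, abs_of_pos hc0]
        have hcr : c * ‖ζ - ξ‖ = ‖ζ - ξ‖ - 1/(2*(M+2)) := by
          rw [hc, sub_mul, one_mul, div_mul_cancel₀ _ hrpos.ne']
        obtain ⟨humid, hDmid⟩ := ih ξ mid ε
          (fun η hη η' hη' => hgid η (hsub hη) η' (hsub hη'))
          (fun η hη => hgM η (hsub hη))
          (by
            rw [hmidξ, hcr]
            have hs1 : (1/(2*(M+2))) * (2*(M+2)) = 1 := by field_simp
            nlinarith)
          hu hD h5n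
        have hζmid : ‖ζ - mid‖ = (1 - c) * ‖ζ - ξ‖ := by
          have h' : ζ - mid = (1 - c) • (ζ - ξ) := by rw [hmiddef]; module
          rw [h', norm_smul, Real.norm_eq_abs, abs_of_pos (by linarith)]
        have hst2 : ‖ζ - mid‖ * (M+2) ≤ 1/2 := by
          rw [hζmid]
          have hc' : 1 - c = (1/(2*(M+2))) / ‖ζ - ξ‖ := by rw [hc]; ring
          have h1c : (1 - c) * ‖ζ - ξ‖ = 1/(2*(M+2)) := by
            rw [hc', div_mul_cancel₀ _ hrpos.ne']
          rw [h1c]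
          have h2 : (1/(2*(M+2))) * (M+2) = 1/2 := by field_simp
          linarith
        have hDmid1 : ‖Ring.inverse (a - mid•1) - g mid‖ ≤ 1 := le_trans hDmid h5n
        obtain ⟨hu2, hb⟩ := step_lemma0 h1 a g M
          (hgid mid hmidmem ζ (right_mem_segment ℝ ξ ζ)) (hgM mid hmidmem)
          (hgM ζ (right_mem_segment ℝ ξ ζ)) humid hDmid1 hst2
        refine ⟨hu2, ?_⟩
        calc ‖Ring.inverse (a - ζ•1) - g ζ‖ ≤ 5 * ‖Ring.inverse (a - mid•1) - g mid‖ := hb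
        _ ≤ 5 * (5^n * ε) := by linarith
        _ = 5^(n+1) * ε := by ring

private lemma sa_unit0 {E : Type*} [NormedAddCommGroup E] [InnerProductSpace ℂ E] [CompleteSpace E]
    {T : E →L[ℂ] E} (hT : IsSelfAdjoint T) {ξ : ℂ} (hξ : ξ.im ≠ 0) : IsUnit (T - ξ • 1) := by
  have hns : ξ ∉ spectrum ℂ T := by
    intro hmem
    have h := hT.mem_spectrum_eq_re hmem
    apply hξ
    rw [h]; simp
  rw [spectrum.notMem_iff] at hns
  have h2 := hns.neg
  rwa [neg_sub, Algebra.algebraMap_eq_smul_one] at h2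

set_option maxHeartbeats 8000000 in
/-- Lemma A.1 (sufficient condition): if the resolvent difference between the
self-adjoint operators `A_m` and `B ⊕ 0` is bounded by `C'/√m` uniformly on the
strip `{|Im ξ| ≥ μ₀, |Re ξ| ≤ ρ}`, where `μ₀ > max_{z ∈ K} |Im z|` and `ρ > 0`,
and `K` is a compact subset of the resolvent set of `B`, then for `m` large
every `z ∈ K` is in the resolvent set of `A_m` and the resolvent difference is
bounded by `C/√m` uniformly on `K`. -/
theorem resolvent_convergence_sufficient_condition
    {H H₀ : Type*} [NormedAddCommGroup H] [InnerProductSpace ℂ H] [CompleteSpace H]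
    [NormedAddCommGroup H₀] [InnerProductSpace ℂ H₀] [CompleteSpace H₀]
    (J : H₀ →L[ℂ] H) (hJ : ∀ x, ‖J x‖ = ‖x‖)
    (A : ℝ → (H →L[ℂ] H)) (hA : ∀ m, IsSelfAdjoint (A m))
    (B : H₀ →L[ℂ] H₀) (hB : IsSelfAdjoint B)
    (K : Set ℂ) (hK : IsCompact K)
    (hKB : ∀ z ∈ K, IsUnit (B - z • 1))
    (μ₀ ρ C' m₀' : ℝ) (hμ₀pos : 0 < μ₀) (hμ₀ : ∀ z ∈ K, |z.im| < μ₀) (hρ : 0 < ρ)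
    (hres : ∀ m : ℝ, m > m₀' → ∀ ξ : ℂ, μ₀ ≤ |ξ.im| → |ξ.re| ≤ ρ →
      IsUnit (A m - ξ • 1) ∧
      ‖Ring.inverse (A m - ξ • 1)
          - J ∘L Ring.inverse (B - ξ • 1) ∘L (adjoint J)‖ ≤ C' / Real.sqrt m) :
    ∃ m₀ C : ℝ, m₀ > m₀' ∧ 0 ≤ C ∧ ∀ m : ℝ, m > m₀ → ∀ z ∈ K,
      IsUnit (A m - z • 1) ∧
      ‖Ring.inverse (A m - z • 1)
          - J ∘L Ring.inverse (B - z • 1) ∘L (adjoint J)‖ ≤ C / Real.sqrt m := by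
  classical
  rcases K.eq_empty_or_nonempty with hKe | hKne
  · refine ⟨max m₀' 0 + 1, 0, by linarith [le_max_left m₀' 0], le_refl 0, ?_⟩
    intro m hm z hz
    rw [hKe] at hz; exact absurd hz (Set.notMem_empty z)
  -- C' is nonnegative
  have hC' : 0 ≤ C' := by
    have hm1 : max m₀' 0 + 1 > m₀' := by linarith [le_max_left m₀' 0]
    have hm1pos : (0:ℝ) < max m₀' 0 + 1 := by linarith [le_max_right m₀' 0]
    have hs := (hres (max m₀' 0 + 1) hm1 ((μ₀:ℂ) * Complex.I)
      (by simp [abs_of_pos hμ₀pos]) (by simp [le_of_lt hρ])).2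
    have hsq : 0 < Real.sqrt (max m₀' 0 + 1) := Real.sqrt_pos.mpr hm1pos
    by_contra hneg
    push_neg at hneg
    have : C' / Real.sqrt (max m₀' 0 + 1) < 0 := div_neg_of_neg_of_pos hneg hsq
    linarith [norm_nonneg (Ring.inverse (A (max m₀' 0 + 1) - ((μ₀:ℂ) * Complex.I) • 1)
      - J ∘L Ring.inverse (B - ((μ₀:ℂ) * Complex.I) • 1) ∘L (adjoint J))]
  -- bound on real parts of K
  obtain ⟨zR, hzRK, hzR⟩ := hK.exists_isMaxOn hKne
    ((continuous_abs.comp Complex.continuous_re).continuousOn)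
  set Rr : ℝ := max |zR.re| ρ with hRrdef
  have hRK : ∀ z ∈ K, |z.re| ≤ Rr := fun z hz => le_trans (hzR hz) (le_max_left _ _)
  have hρR : ρ ≤ Rr := le_max_right _ _
  have hRr0 : 0 < Rr := lt_of_lt_of_le hρ hρR
  -- isometry facts
  have hadj : adjoint J ∘L J = 1 := (norm_map_iff_adjoint_comp_self J).mp hJ
  have hJJ : ∀ x, adjoint J (J x) = x := by
    intro x
    have h := DFunLike.congr_fun hadj x
    simpa using h
  have hJn : ‖J‖ ≤ 1 := J.opNorm_le_bound zero_le_one (fun x => by rw [hJ x, one_mul])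
  have hJan : ‖(adjoint J : H →L[ℂ] H₀)‖ ≤ 1 := by
    rw [ContinuousLinearMap.adjoint.norm_map J]; exact hJn
  set G : ℂ → (H →L[ℂ] H) := fun η => J ∘L Ring.inverse (B - η • 1) ∘L adjoint J with hGdef
  have hGnorm : ∀ η : ℂ, ‖G η‖ ≤ ‖Ring.inverse (B - η • 1)‖ := by
    intro η
    refine le_trans (opNorm_comp_le _ _) ?_
    have h2 := opNorm_comp_le (Ring.inverse (B - η • 1)) (adjoint J : H →L[ℂ] H₀)
    nlinarith [norm_nonneg (Ring.inverse (B - η • 1)),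
      norm_nonneg (adjoint J : H →L[ℂ] H₀),
      norm_nonneg (Ring.inverse (B - η • 1) ∘L (adjoint J : H →L[ℂ] H₀)), norm_nonneg J]
  have hGid : ∀ η ζ : ℂ, IsUnit (B - η • 1) → IsUnit (B - ζ • 1) →
      G ζ - G η = (ζ - η) • (G ζ * G η) := by
    intro η ζ hη hζ
    have hid := res_id0 B hη hζ
    ext x
    have h2 := DFunLike.congr_fun hid ((adjoint J) x)
    simp only [ContinuousLinearMap.sub_apply, ContinuousLinearMap.smul_apply,
      ContinuousLinearMap.mul_apply, ContinuousLinearMap.coe_comp',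
      Function.comp_apply, hGdef] at h2 ⊢
    rw [hJJ, ← map_sub J, h2, map_smul]
  -- the compact set T of path points
  set f1 : ℝ → ℂ := fun x => (x:ℂ) + (μ₀:ℂ) * Complex.I with hf1
  set f1' : ℝ → ℂ := fun x => (x:ℂ) + (-μ₀:ℝ) * Complex.I with hf1'
  set f2 : ℂ × ℝ → ℂ := fun p => (p.1.re:ℂ) + ((1-p.2)*p.1.im + p.2*μ₀ : ℝ) * Complex.I with hf2
  set f3 : ℂ × ℝ → ℂ := fun p => (p.1.re:ℂ) + ((1-p.2)*p.1.im + p.2*(-μ₀) : ℝ) * Complex.I with hf3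
  set Kp : Set ℂ := K ∩ {z | 0 ≤ z.im} with hKp
  set Km : Set ℂ := K ∩ {z | z.im ≤ 0} with hKm
  set T : Set ℂ := f1 '' Set.Icc (-Rr) Rr ∪ f1' '' Set.Icc (-Rr) Rr ∪
      f2 '' (Kp ×ˢ Set.Icc (0:ℝ) 1) ∪ f3 '' (Km ×ˢ Set.Icc (0:ℝ) 1) with hT
  have hf1c : Continuous f1 := by fun_prop
  have hf1'c : Continuous f1' := by fun_prop
  have hf2c : Continuous f2 := by fun_prop
  have hf3c : Continuous f3 := by fun_prop
  have hKpc : IsCompact Kp := hK.inter_right (isClosed_le continuous_const Complex.continuous_im)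
  have hKmc : IsCompact Km := hK.inter_right (isClosed_le Complex.continuous_im continuous_const)
  have hTc : IsCompact T := by
    refine (((isCompact_Icc.image hf1c).union (isCompact_Icc.image hf1'c)).union
      ((hKpc.prod isCompact_Icc).image hf2c)).union ((hKmc.prod isCompact_Icc).image hf3c)
  have hTne : T.Nonempty := ⟨f1 0, by
    refine Or.inl (Or.inl (Or.inl ⟨0, ⟨by linarith, by linarith⟩, rfl⟩))⟩
  -- every point of T is in the resolvent set of B
  have hTunit : ∀ η ∈ T, IsUnit (B - η • 1) := by
    rintro η (((⟨x, hx, rfl⟩ | ⟨x, hx, rfl⟩) | ⟨⟨z, u⟩, ⟨⟨hzK, hzim⟩, hu0, hu1⟩, rfl⟩) |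
      ⟨⟨z, u⟩, ⟨⟨hzK, hzim⟩, hu0, hu1⟩, rfl⟩)
    · exact sa_unit0 hB (by simp [hf1, hμ₀pos.ne'])
    · exact sa_unit0 hB (by simp [hf1', hμ₀pos.ne'])
    · have hzim' : 0 ≤ z.im := hzim
      have hu0' : (0:ℝ) ≤ u := hu0
      have hu1' : u ≤ 1 := hu1
      by_cases him : (1-u)*z.im + u*μ₀ = 0
      · have hle : u * μ₀ ≤ 0 := by nlinarith
        have hu00 : u = 0 := le_antisymm (by nlinarith) hu0'
        have hη : f2 (z, u) = z := by
          show ((z.re:ℂ) + ((1-u)*z.im + u*μ₀ : ℝ) * Complex.I) = z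
          rw [hu00]
          norm_num [Complex.re_add_im]
        rw [hη]; exact hKB z hzK
      · exact sa_unit0 hB (by simp [hf2]; exact him)
    · have hzim' : z.im ≤ 0 := hzim
      have hu0' : (0:ℝ) ≤ u := hu0
      have hu1' : u ≤ 1 := hu1
      by_cases him : (1-u)*z.im + u*(-μ₀) = 0
      · have hle : 0 ≤ u * μ₀ := by nlinarith
        have hu00 : u = 0 := le_antisymm (by nlinarith) hu0'
        have hη : f3 (z, u) = z := by
          show ((z.re:ℂ) + ((1-u)*z.im + u*(-μ₀) : ℝ) * Complex.I) = z
          rw [hu00]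
          norm_num [Complex.re_add_im]
        rw [hη]; exact hKB z hzK
      · exact sa_unit0 hB (by simp [hf3, mul_neg]; intro hc; exact him (by linarith))
  -- uniform bound for the resolvent of B on T
  have hcont : ContinuousOn (fun η : ℂ => ‖Ring.inverse (B - η • 1)‖) T := by
    intro η hη
    have h1 : ContinuousAt Ring.inverse (B - η • 1) := by
      have := NormedRing.inverse_continuousAt (hTunit η hη).unit
      rwa [IsUnit.unit_spec] at this
    have h2 : ContinuousAt (fun η : ℂ => B - η • 1) η :=
      (continuous_const.sub (continuous_id.smul continuous_const)).continuousAt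
    have h3 : ContinuousAt (fun η : ℂ => Ring.inverse (B - η • 1)) η :=
      ContinuousAt.comp (g := Ring.inverse) (f := fun η : ℂ => B - η • 1) h1 h2
    exact (h3.norm).continuousWithinAt
  obtain ⟨ηM, hηMT, hηM⟩ := hTc.exists_isMaxOn hTne hcont
  set M : ℝ := max ‖Ring.inverse (B - ηM • 1)‖ 0 with hMdef
  have hM0 : 0 ≤ M := le_max_right _ _
  have hMT : ∀ η ∈ T, ‖Ring.inverse (B - η • 1)‖ ≤ M :=
    fun η hη => le_trans (hηM hη) (le_max_left _ _)
  have hGM : ∀ η ∈ T, ‖G η‖ ≤ M := fun η hη => le_trans (hGnorm η) (hMT η hη)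
  -- number of steps
  set N : ℕ := ⌈(2*Rr + 2*μ₀) * (2*(M+2))⌉₊ with hNdef
  have hNle : (2*Rr + 2*μ₀) * (2*(M+2)) ≤ (N:ℝ) := Nat.le_ceil _
  -- choice of m₀ and C
  refine ⟨max m₀' 0 + 1 + (5^(2*N) * C')^2, 5^(2*N) * C',
    by linarith [le_max_left m₀' 0, sq_nonneg (5^(2*N) * C')],
    mul_nonneg (pow_nonneg (by norm_num) _) hC', ?_⟩
  intro m hm z hz
  have hmm' : m > m₀' := by linarith [le_max_left m₀' 0, sq_nonneg (5^(2*N) * C'), le_max_right m₀' 0]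
  have hmpos : 0 < m := by linarith [le_max_right m₀' 0, sq_nonneg (5^(2*N) * C')]
  have hsq : 0 < Real.sqrt m := Real.sqrt_pos.mpr hmpos
  have hsqC : 5^(2*N) * C' ≤ Real.sqrt m := by
    have h1 : ((5:ℝ)^(2*N) * C')^2 ≤ m := by linarith [le_max_right m₀' 0, le_max_left m₀' 0]
    have h2 := Real.sqrt_le_sqrt h1
    rwa [Real.sqrt_sq (mul_nonneg (pow_nonneg (by norm_num) _) hC')] at h2
  set ε : ℝ := C' / Real.sqrt m with hεdef
  have hε0 : 0 ≤ ε := div_nonneg hC' (Real.sqrt_nonneg m)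
  have hkey : (5:ℝ)^(2*N) * ε ≤ 1 := by
    rw [hεdef, ← mul_div_assoc, div_le_one hsq]; exact hsqC
  have h5N2 : (5:ℝ)^N ≤ 5^(2*N) := pow_le_pow_right₀ (by norm_num) (by omega)
  have h5N1 : (1:ℝ) ≤ 5^N := one_le_pow₀ (by norm_num)
  have hkeyN : (5:ℝ)^N * ε ≤ 1 := le_trans (by nlinarith) hkey
  have h1n : ‖(1 : H →L[ℂ] H)‖ ≤ 1 := by
    rw [ContinuousLinearMap.one_def]; exact ContinuousLinearMap.norm_id_le
  have hzre : |z.re| ≤ Rr := hRK z hz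
  have hzim : |z.im| < μ₀ := hμ₀ z hz
  set x₀ : ℝ := max (-ρ) (min ρ z.re) with hx₀def
  have hx₀ : |x₀| ≤ ρ := by
    rw [abs_le]
    constructor
    · exact le_max_left _ _
    · exact max_le (by linarith) (min_le_left _ _)
  have hx₀R : |x₀| ≤ Rr := le_trans hx₀ hρR
  -- the two cases according to the sign of z.im
  rcases le_or_gt 0 z.im with hsgn | hsgn
  · -- ξ₀ and ξz on the line Im = μ₀
    set ξ₀ : ℂ := (x₀:ℂ) + (μ₀:ℂ) * Complex.I with hξ₀def
    set ξz : ℂ := (z.re:ℂ) + (μ₀:ℂ) * Complex.I with hξzdef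
    obtain ⟨hu₀, hD₀⟩ := hres m hmm' ξ₀ (by simp [hξ₀def, abs_of_pos hμ₀pos]) (by simp [hξ₀def]; exact hx₀)
    -- horizontal segment lies in T
    have hseg1 : segment ℝ ξ₀ ξz ⊆ T := by
      rintro η ⟨u, v, hu, hv, huv, rfl⟩
      have huv' : (u:ℂ) + (v:ℂ) = 1 := by exact_mod_cast huv
      refine Or.inl (Or.inl (Or.inl ⟨u*x₀ + v*z.re, ?_, ?_⟩))
      · constructor
        · nlinarith [abs_le.mp hx₀R, abs_le.mp hzre]
        · nlinarith [abs_le.mp hx₀R, abs_le.mp hzre]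
      · show ((u*x₀ + v*z.re : ℝ):ℂ) + (μ₀:ℂ) * Complex.I = u • ξ₀ + v • ξz
        simp only [Complex.real_smul, hξ₀def, hξzdef]
        push_cast
        linear_combination (-(μ₀:ℂ) * Complex.I) * huv'
    have hlen1 : ‖ξz - ξ₀‖ * (2*(M+2)) ≤ (N:ℝ) := by
      have hd : ξz - ξ₀ = ((z.re - x₀ : ℝ) : ℂ) := by
        rw [hξzdef, hξ₀def]; push_cast; ring
      rw [hd, Complex.norm_real, Real.norm_eq_abs]
      have hab : |z.re - x₀| ≤ 2*Rr := by
        have h2 := abs_sub z.re x₀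
        linarith
      nlinarith [hNle]
    obtain ⟨hu₁, hD₁⟩ := chain_lemma0 h1n (A m) G M N ξ₀ ξz ε
      (fun η hη η' hη' => hGid η η' (hTunit η (hseg1 hη)) (hTunit η' (hseg1 hη')))
      (fun η hη => hGM η (hseg1 hη)) hlen1 hu₀ hD₀ hkeyN
    -- vertical segment lies in T
    have hseg2 : segment ℝ ξz z ⊆ T := by
      rintro η ⟨u, v, hu, hv, huv, rfl⟩
      have huv' : (u:ℂ) + (v:ℂ) = 1 := by exact_mod_cast huv
      refine Or.inl (Or.inr ⟨(z, u), ⟨⟨hz, hsgn⟩, hu, by linarith⟩, ?_⟩)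
      show ((z.re:ℂ) + ((1-u)*z.im + u*μ₀ : ℝ) * Complex.I) = u • ξz + v • z
      simp only [Complex.real_smul, hξzdef]
      have hz_eq : (z:ℂ) = (z.re:ℂ) + (z.im:ℂ) * Complex.I := (Complex.re_add_im z).symm
      push_cast
      linear_combination (-((z.re:ℂ) + (z.im:ℂ) * Complex.I)) * huv' + (-(v:ℂ)) * hz_eq
    have hlen2 : ‖z - ξz‖ * (2*(M+2)) ≤ (N:ℝ) := by
      have hd : z - ξz = ((z.im - μ₀ : ℝ) : ℂ) * Complex.I := by
        apply Complex.ext <;> simp [hξzdef]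
      rw [hd, norm_mul, Complex.norm_real, Complex.norm_I, mul_one, Real.norm_eq_abs]
      have hab : |z.im - μ₀| ≤ 2*μ₀ := by
        have h' := abs_lt.mp hzim
        rw [abs_le]
        constructor <;> linarith [h'.1, h'.2]
      nlinarith [hNle, hRr0]
    obtain ⟨hu₂, hD₂⟩ := chain_lemma0 h1n (A m) G M N ξz z (5^N * ε)
      (fun η hη η' hη' => hGid η η' (hTunit η (hseg2 hη)) (hTunit η' (hseg2 hη')))
      (fun η hη => hGM η (hseg2 hη)) hlen2 hu₁ hD₁
      (by rw [← mul_assoc, ← pow_add, show N + N = 2*N from by ring]; exact hkey)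
    refine ⟨hu₂, ?_⟩
    calc ‖Ring.inverse (A m - z • 1) - J ∘L Ring.inverse (B - z • 1) ∘L (adjoint J)‖
        = ‖Ring.inverse (A m - z • 1) - G z‖ := rfl
    _ ≤ 5^N * (5^N * ε) := hD₂
    _ = 5^(2*N) * C' / Real.sqrt m := by
        rw [hεdef, ← mul_assoc, ← pow_add, show N + N = 2*N by ring, mul_div_assoc]
  · -- mirror case : Im z < 0, work on the line Im = -μ₀
    set ξ₀ : ℂ := (x₀:ℂ) + ((-μ₀:ℝ):ℂ) * Complex.I with hξ₀def
    set ξz : ℂ := (z.re:ℂ) + ((-μ₀:ℝ):ℂ) * Complex.I with hξzdef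
    obtain ⟨hu₀, hD₀⟩ := hres m hmm' ξ₀
      (by simp [hξ₀def, abs_of_pos hμ₀pos]) (by simp [hξ₀def]; exact hx₀)
    have hseg1 : segment ℝ ξ₀ ξz ⊆ T := by
      rintro η ⟨u, v, hu, hv, huv, rfl⟩
      have huv' : (u:ℂ) + (v:ℂ) = 1 := by exact_mod_cast huv
      refine Or.inl (Or.inl (Or.inr ⟨u*x₀ + v*z.re, ?_, ?_⟩))
      · constructor
        · nlinarith [abs_le.mp hx₀R, abs_le.mp hzre]
        · nlinarith [abs_le.mp hx₀R, abs_le.mp hzre]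
      · show ((u*x₀ + v*z.re : ℝ):ℂ) + ((-μ₀:ℝ):ℂ) * Complex.I = u • ξ₀ + v • ξz
        simp only [Complex.real_smul, hξ₀def, hξzdef]
        push_cast
        linear_combination ((μ₀:ℂ) * Complex.I) * huv'
    have hlen1 : ‖ξz - ξ₀‖ * (2*(M+2)) ≤ (N:ℝ) := by
      have hd : ξz - ξ₀ = ((z.re - x₀ : ℝ) : ℂ) := by
        rw [hξzdef, hξ₀def]; push_cast; ring
      rw [hd, Complex.norm_real, Real.norm_eq_abs]
      have hab : |z.re - x₀| ≤ 2*Rr := by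
        have h2 := abs_sub z.re x₀
        linarith
      nlinarith [hNle]
    obtain ⟨hu₁, hD₁⟩ := chain_lemma0 h1n (A m) G M N ξ₀ ξz ε
      (fun η hη η' hη' => hGid η η' (hTunit η (hseg1 hη)) (hTunit η' (hseg1 hη')))
      (fun η hη => hGM η (hseg1 hη)) hlen1 hu₀ hD₀ hkeyN
    have hseg2 : segment ℝ ξz z ⊆ T := by
      rintro η ⟨u, v, hu, hv, huv, rfl⟩
      have huv' : (u:ℂ) + (v:ℂ) = 1 := by exact_mod_cast huv
      refine Or.inr ⟨(z, u), ⟨⟨hz, le_of_lt hsgn⟩, hu, by linarith⟩, ?_⟩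
      show ((z.re:ℂ) + ((1-u)*z.im + u*(-μ₀) : ℝ) * Complex.I) = u • ξz + v • z
      simp only [Complex.real_smul, hξzdef]
      have hz_eq : (z:ℂ) = (z.re:ℂ) + (z.im:ℂ) * Complex.I := (Complex.re_add_im z).symm
      push_cast
      linear_combination (-((z.re:ℂ) + (z.im:ℂ) * Complex.I)) * huv' + (-(v:ℂ)) * hz_eq
    have hlen2 : ‖z - ξz‖ * (2*(M+2)) ≤ (N:ℝ) := by
      have hd : z - ξz = ((z.im + μ₀ : ℝ) : ℂ) * Complex.I := by
        apply Complex.ext <;> simp [hξzdef]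
      rw [hd, norm_mul, Complex.norm_real, Complex.norm_I, mul_one, Real.norm_eq_abs]
      have hab : |z.im + μ₀| ≤ 2*μ₀ := by
        have h' := abs_lt.mp hzim
        rw [abs_le]
        constructor <;> linarith [h'.1, h'.2]
      nlinarith [hNle, hRr0]
    obtain ⟨hu₂, hD₂⟩ := chain_lemma0 h1n (A m) G M N ξz z (5^N * ε)
      (fun η hη η' hη' => hGid η η' (hTunit η (hseg2 hη)) (hTunit η' (hseg2 hη')))
      (fun η hη => hGM η (hseg2 hη)) hlen2 hu₁ hD₁
      (by rw [← mul_assoc, ← pow_add, show N + N = 2*N from by ring]; exact hkey)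
    refine ⟨hu₂, ?_⟩
    calc ‖Ring.inverse (A m - z • 1) - J ∘L Ring.inverse (B - z • 1) ∘L (adjoint J)‖
        = ‖Ring.inverse (A m - z • 1) - G z‖ := rfl
    _ ≤ 5^N * (5^N * ε) := hD₂
    _ = 5^(2*N) * C' / Real.sqrt m := by
        rw [hεdef, ← mul_assoc, ← pow_add, show N + N = 2*N by ring, mul_div_assoc]
end
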